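/- Let g ∈ L²(ℝ²) be such that y·g(x,y) and y²·g(x,y) are both in L²(ℝ²), and suppose that for almost every x ∈ ℝ one has ∫_ℝ g(x,y) dy = 0. Define f(x,y) = ∫_0^∞ g(x, t+y) dt. Then f ∈ L²(ℝ²) and ‖f‖ ≤ 2(‖g‖ + ‖y·g‖ + ‖y²·g‖), where ‖·‖ denotes the L²(ℝ²) norm. -/

import Mathlib

open MeasureTheory Set
open scoped ENNReal

namespace Statement1Aux

noncomputable def K (s : ℝ) : ℝ≥0∞ := ENNReal.ofReal ((1 + s^2)^2)
noncomputable def φ (s : ℝ) : ℝ≥0∞ := ENNReal.ofReal (((1 + s^2)^2)⁻¹)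

lemma φ_meas : Measurable φ := by
  apply ENNReal.measurable_ofReal.comp
  fun_prop

lemma lintegral_inv_one_add_sq :
    ∫⁻ s : ℝ, ENNReal.ofReal ((1 + s^2)⁻¹) = ENNReal.ofReal Real.pi := by
  rw [← ofReal_integral_eq_lintegral_ofReal integrable_inv_one_add_sq
    (Filter.Eventually.of_forall fun s => by positivity), integral_univ_inv_one_add_sq]

lemma lintegral_φ_le : ∫⁻ s : ℝ, φ s ≤ ENNReal.ofReal Real.pi := by
  rw [← lintegral_inv_one_add_sq]
  refine lintegral_mono fun s => ENNReal.ofReal_le_ofReal ?_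
  have h : (0:ℝ) < 1 + s^2 := by positivity
  have h2 : (1 + s^2 : ℝ) ≤ (1+s^2)^2 := by nlinarith
  exact inv_anti₀ h h2

lemma cs {α : Type*} [MeasurableSpace α] (μ : Measure α) {u v : α → ℝ≥0∞}
    (hu : AEMeasurable u μ) (hv : AEMeasurable v μ) :
    ∫⁻ s, u s * v s ∂μ ≤ (∫⁻ s, (u s)^2 ∂μ) ^ (1/2:ℝ) * (∫⁻ s, (v s)^2 ∂μ) ^ (1/2:ℝ) := by
  have h := ENNReal.lintegral_mul_le_Lp_mul_Lq μ
    Real.HolderConjugate.two_two hu hv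
  simp only [Pi.mul_apply] at h
  calc ∫⁻ s, u s * v s ∂μ
      ≤ (∫⁻ a, u a ^ (2:ℝ) ∂μ) ^ (1/(2:ℝ)) * (∫⁻ a, v a ^ (2:ℝ) ∂μ) ^ (1/(2:ℝ)) := h
    _ = _ := by
        congr 2 <;> refine lintegral_congr fun a => ?_ <;>
          rw [show ((2:ℝ)) = ((2:ℕ):ℝ) by norm_num, ENNReal.rpow_natCast]

lemma sq_halves (a b : ℝ≥0∞) : (a ^ (1/2:ℝ) * b ^ (1/2:ℝ))^2 = a * b := by
  rw [mul_pow, ← ENNReal.rpow_natCast (a ^ (1/2:ℝ)) 2, ← ENNReal.rpow_natCast (b ^ (1/2:ℝ)) 2,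
    ← ENNReal.rpow_mul, ← ENNReal.rpow_mul]
  norm_num

lemma rpow_sq_half (x : ℝ≥0∞) : (x^2) ^ (1/2:ℝ) = x := by
  rw [← ENNReal.rpow_natCast x 2, ← ENNReal.rpow_mul]; norm_num

lemma eLpNorm_two_eq {α : Type*} [MeasurableSpace α] {μ : Measure α} (h : α → ℂ) :
    eLpNorm h 2 μ = (∫⁻ a, (‖h a‖₊ : ℝ≥0∞)^2 ∂μ) ^ (1/2:ℝ) := by
  rw [eLpNorm_eq_lintegral_rpow_enorm_toReal two_ne_zero ENNReal.ofNat_ne_top]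
  norm_num
  rfl

lemma eLpNorm_two_sq {α : Type*} [MeasurableSpace α] {μ : Measure α} (h : α → ℂ) :
    (eLpNorm h 2 μ) ^ 2 = ∫⁻ a, (‖h a‖₊ : ℝ≥0∞)^2 ∂μ := by
  rw [eLpNorm_two_eq, ← ENNReal.rpow_natCast _ 2, ← ENNReal.rpow_mul]
  norm_num

noncomputable def w (y : ℝ) : ℝ≥0∞ := if 0 ≤ y then ∫⁻ s in Ioi y, φ s else ∫⁻ s in Iio y, φ s

lemma phi_mul (s r : ℝ) (hr : 2*r ≤ 1 + s^2) :
    φ s * ENNReal.ofReal r ≤ ENNReal.ofReal (2⁻¹ * (1+s^2)⁻¹) := by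
  rcases le_or_gt r 0 with h | h
  · rw [ENNReal.ofReal_of_nonpos h, mul_zero]; exact zero_le
  · rw [φ, ← ENNReal.ofReal_mul (by positivity)]
    apply ENNReal.ofReal_le_ofReal
    have h1 : (0:ℝ) < 1 + s^2 := by positivity
    rw [inv_mul_le_iff₀ (by positivity)]
    have he : ((1+s^2):ℝ)^2 * (2⁻¹ * (1+s^2)⁻¹) = (1+s^2)/2 := by field_simp
    rw [he]; linarith

lemma lintegral_w_le : ∫⁻ y : ℝ, w y ≤ ENNReal.ofReal Real.pi := by
  set S : Set (ℝ × ℝ) := {q : ℝ × ℝ | (0 ≤ q.1 ∧ q.1 < q.2) ∨ (q.1 < 0 ∧ q.2 < q.1)} with hSdef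
  have hS : MeasurableSet S := by
    apply MeasurableSet.union
    · exact (measurableSet_le measurable_const measurable_fst).inter
        (measurableSet_lt measurable_fst measurable_snd)
    · exact (measurableSet_lt measurable_fst measurable_const).inter
        (measurableSet_lt measurable_snd measurable_fst)
  set Ψ : ℝ → ℝ → ℝ≥0∞ := fun y s => S.indicator (fun q => φ q.2) (y, s) with hΨ
  have hw : ∀ y, w y = ∫⁻ s, Ψ y s := by
    intro y
    rcases le_or_gt 0 y with hy | hy
    · rw [w, if_pos hy, ← lintegral_indicator measurableSet_Ioi]
      refine lintegral_congr fun s => ?_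
      by_cases hs : y < s
      · have hne : Ψ y s = φ s :=
          Set.indicator_of_mem (show ((y,s) : ℝ×ℝ) ∈ S from Or.inl ⟨hy, hs⟩) _
        rw [Set.indicator_of_mem (mem_Ioi.2 hs), hne]
      · have hne : Ψ y s = 0 := Set.indicator_of_notMem ?_ _
        rw [Set.indicator_of_notMem (by simpa using hs), hne]
        rintro (⟨_, h2⟩ | ⟨h1, _⟩)
        exacts [hs h2, absurd hy (not_le.2 h1)]
    · rw [w, if_neg (not_le.2 hy), ← lintegral_indicator measurableSet_Iio]
      refine lintegral_congr fun s => ?_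
      by_cases hs : s < y
      · have hne : Ψ y s = φ s :=
          Set.indicator_of_mem (show ((y,s) : ℝ×ℝ) ∈ S from Or.inr ⟨hy, hs⟩) _
        rw [Set.indicator_of_mem (mem_Iio.2 hs), hne]
      · have hne : Ψ y s = 0 := Set.indicator_of_notMem ?_ _
        rw [Set.indicator_of_notMem (by simpa using hs), hne]
        rintro (⟨h1, _⟩ | ⟨_, h2⟩)
        exacts [absurd h1 (not_le.2 hy), hs h2]
  calc ∫⁻ y : ℝ, w y = ∫⁻ y : ℝ, ∫⁻ s : ℝ, Ψ y s := lintegral_congr hw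
    _ = ∫⁻ s : ℝ, ∫⁻ y : ℝ, Ψ y s := by
        refine lintegral_lintegral_swap ?_
        exact ((φ_meas.comp measurable_snd).indicator hS).aemeasurable
    _ ≤ ∫⁻ s : ℝ, φ s * (ENNReal.ofReal s + ENNReal.ofReal (-s)) := by
        refine lintegral_mono fun s => ?_
        have hpt : ∀ y : ℝ, Ψ y s = Set.indicator (Ico 0 s ∪ Ioo s 0) (fun _ => φ s) y := by
          intro y
          by_cases h : ((y,s) : ℝ×ℝ) ∈ S
          · have hne : Ψ y s = φ s := Set.indicator_of_mem h _
            rw [hne, Set.indicator_of_mem ?_]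
            rcases h with h | h
            exacts [Or.inl ⟨h.1, h.2⟩, Or.inr ⟨h.2, h.1⟩]
          · have hne : Ψ y s = 0 := Set.indicator_of_notMem h _
            rw [hne, Set.indicator_of_notMem ?_]
            intro hc; apply h
            rcases hc with hc | hc
            exacts [Or.inl ⟨hc.1, hc.2⟩, Or.inr ⟨hc.2, hc.1⟩]
        calc ∫⁻ y : ℝ, Ψ y s
            = ∫⁻ y : ℝ, Set.indicator (Ico 0 s ∪ Ioo s 0) (fun _ => φ s) y :=
              lintegral_congr hpt
          _ = φ s * volume (Ico 0 s ∪ Ioo s 0) :=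
              lintegral_indicator_const (measurableSet_Ico.union measurableSet_Ioo) _
          _ ≤ φ s * (ENNReal.ofReal s + ENNReal.ofReal (-s)) := by
              refine mul_le_mul_right ?_ _
              refine (measure_union_le _ _).trans ?_
              rw [Real.volume_Ico, Real.volume_Ioo, sub_zero, zero_sub]
    _ ≤ ∫⁻ s : ℝ, ENNReal.ofReal ((1+s^2)⁻¹) := by
        refine lintegral_mono fun s => ?_
        rw [mul_add]
        have h1 := phi_mul s s (by nlinarith [sq_nonneg (s-1)])
        have h2 := phi_mul s (-s) (by nlinarith [sq_nonneg (s+1)])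
        refine (add_le_add h1 h2).trans (le_of_eq ?_)
        rw [← ENNReal.ofReal_add (by positivity) (by positivity)]
        congr 1; ring
    _ = ENNReal.ofReal Real.pi := lintegral_inv_one_add_sq

end Statement1Aux


open Statement1Aux

theorem statement1 (g : ℝ → ℝ → ℂ)
    (hg : MemLp (fun p : ℝ × ℝ => g p.1 p.2) 2 volume)
    (hyg : MemLp (fun p : ℝ × ℝ => (p.2 : ℂ) * g p.1 p.2) 2 volume)
    (hy2g : MemLp (fun p : ℝ × ℝ => (p.2 : ℂ) ^ 2 * g p.1 p.2) 2 volume)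
    (hzero : ∀ᵐ x : ℝ, (∫ y : ℝ, g x y) = 0)
    (f : ℝ → ℝ → ℂ)
    (hf : ∀ x y : ℝ, f x y = ∫ t in Set.Ioi (0 : ℝ), g x (t + y)) :
    MemLp (fun p : ℝ × ℝ => f p.1 p.2) 2 volume ∧
      (eLpNorm (fun p : ℝ × ℝ => f p.1 p.2) 2 volume).toReal ≤
        2 * ((eLpNorm (fun p : ℝ × ℝ => g p.1 p.2) 2 volume).toReal
          + (eLpNorm (fun p : ℝ × ℝ => (p.2 : ℂ) * g p.1 p.2) 2 volume).toReal
          + (eLpNorm (fun p : ℝ × ℝ => (p.2 : ℂ) ^ 2 * g p.1 p.2) 2 volume).toReal) := by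
  classical
  have hprod := Measure.volume_eq_prod ℝ ℝ
  -- strongly measurable modification of g
  set G0 : ℝ × ℝ → ℂ := hg.1.mk _ with hG0def
  have hG0sm : StronglyMeasurable G0 := hg.1.stronglyMeasurable_mk
  have hae : (fun p : ℝ × ℝ => g p.1 p.2) =ᵐ[volume] G0 := hg.1.ae_eq_mk
  have hslice_eq : ∀ᵐ x : ℝ, (g x) =ᵐ[volume] (fun s => G0 (x, s)) := by
    rw [Measure.volume_eq_prod] at hae
    exact Measure.ae_ae_of_ae_prod hae
  -- change of variables
  have hE1 : ∀ x y : ℝ, f x y = ∫ s in Ioi y, g x s := by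
    intro x y
    have hind : ∀ t : ℝ, (Ioi (0:ℝ)).indicator (fun t' => g x (t' + y)) t
        = (Ioi y).indicator (g x) (t + y) := by
      intro t
      by_cases ht : 0 < t
      · rw [Set.indicator_of_mem (mem_Ioi.2 ht), Set.indicator_of_mem (mem_Ioi.2 (by linarith))]
      · rw [Set.indicator_of_notMem (by simpa using ht),
          Set.indicator_of_notMem (by simp only [mem_Ioi, not_lt] at ht ⊢; linarith)]
    rw [hf x y, ← integral_indicator measurableSet_Ioi]
    calc ∫ t : ℝ, (Ioi (0:ℝ)).indicator (fun t' => g x (t' + y)) t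
        = ∫ t : ℝ, (Ioi y).indicator (g x) (t + y) :=
          integral_congr_ae (Filter.Eventually.of_forall hind)
      _ = ∫ s : ℝ, (Ioi y).indicator (g x) s := integral_add_right_eq_self _ y
      _ = ∫ s in Ioi y, g x s := integral_indicator measurableSet_Ioi
  -- strongly measurable version of f
  set F : (ℝ × ℝ) × ℝ → ℂ :=
    fun q => Set.indicator {q' : (ℝ × ℝ) × ℝ | q'.1.2 < q'.2} (fun q' => G0 (q'.1.1, q'.2)) q
    with hFdef
  have hF_sm : StronglyMeasurable F := by
    refine StronglyMeasurable.indicator ?_ ?_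
    · exact hG0sm.comp_measurable ((measurable_fst.comp measurable_fst).prodMk measurable_snd)
    · exact measurableSet_lt (measurable_snd.comp measurable_fst) measurable_snd
  set f0 : ℝ × ℝ → ℂ := fun p => ∫ s, F (p, s) with hf0def
  have hf0_sm : StronglyMeasurable f0 := hF_sm.integral_prod_right'
  -- ae facts about the first coordinate
  have fst_ae : ∀ {P : ℝ → Prop}, (∀ᵐ x : ℝ, P x) → ∀ᵐ p : ℝ × ℝ, P p.1 := by
    intro P hP
    rw [Measure.volume_eq_prod]
    refine ae_iff.2 ?_
    have h0 : volume {x : ℝ | ¬ P x} = 0 := ae_iff.1 hP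
    exact Measure.quasiMeasurePreserving_fst.preimage_null h0
  have hfae : (fun p : ℝ × ℝ => f p.1 p.2) =ᵐ[volume] f0 := by
    filter_upwards [fst_ae hslice_eq] with p hp
    rw [hE1 p.1 p.2]
    have h1 : ∫ s in Ioi p.2, g p.1 s = ∫ s in Ioi p.2, G0 (p.1, s) :=
      integral_congr_ae (ae_restrict_of_ae hp)
    have h2 : ∀ s : ℝ, F (p, s) = (Ioi p.2).indicator (fun s' => G0 (p.1, s')) s := by
      intro s
      by_cases hs : p.2 < s
      · have := Set.indicator_of_mem (show ((p,s) : (ℝ×ℝ)×ℝ) ∈ {q' : (ℝ×ℝ)×ℝ | q'.1.2 < q'.2}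
          from hs) (fun q' : (ℝ×ℝ)×ℝ => G0 (q'.1.1, q'.2))
        rw [show F (p, s) = G0 (p.1, s) from this, Set.indicator_of_mem (mem_Ioi.2 hs)]
      · have := Set.indicator_of_notMem (show ((p,s) : (ℝ×ℝ)×ℝ) ∉ {q' : (ℝ×ℝ)×ℝ | q'.1.2 < q'.2}
          from hs) (fun q' : (ℝ×ℝ)×ℝ => G0 (q'.1.1, q'.2))
        rw [show F (p, s) = 0 from this, Set.indicator_of_notMem (by simpa using hs)]
    rw [h1, hf0def]
    calc ∫ s in Ioi p.2, G0 (p.1, s)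
        = ∫ s : ℝ, (Ioi p.2).indicator (fun s' => G0 (p.1, s')) s :=
          (integral_indicator measurableSet_Ioi).symm
      _ = ∫ s : ℝ, F (p, s) := (integral_congr_ae (Filter.Eventually.of_forall h2)).symm
  have hfAESM : AEStronglyMeasurable (fun p : ℝ × ℝ => f p.1 p.2) volume := ⟨f0, hf0_sm, hfae⟩
  -- norms
  set na := eLpNorm (fun p : ℝ × ℝ => g p.1 p.2) 2 volume with hna_def
  set nb := eLpNorm (fun p : ℝ × ℝ => (p.2 : ℂ) * g p.1 p.2) 2 volume with hnb_def
  set nc := eLpNorm (fun p : ℝ × ℝ => (p.2 : ℂ) ^ 2 * g p.1 p.2) 2 volume with hnc_def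
  have hna_ne : na ≠ ⊤ := hg.2.ne
  have hnb_ne : nb ≠ ⊤ := hyg.2.ne
  have hnc_ne : nc ≠ ⊤ := hy2g.2.ne
  have hKmeas : Measurable K := by
    apply ENNReal.measurable_ofReal.comp; fun_prop
  have hgm : AEMeasurable (fun p : ℝ × ℝ => ((‖g p.1 p.2‖₊ : ℝ≥0∞))) volume := hg.1.enorm
  -- pointwise identities
  have e1 : ∀ p : ℝ × ℝ, (‖(p.2 : ℂ) * g p.1 p.2‖₊ : ℝ≥0∞)^2
      = ENNReal.ofReal (p.2^2) * (‖g p.1 p.2‖₊ : ℝ≥0∞)^2 := by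
    intro p
    rw [nnnorm_mul, Complex.nnnorm_real, ENNReal.coe_mul, mul_pow]
    congr 1
    rw [← enorm_eq_nnnorm, Real.enorm_eq_ofReal_abs, ← ENNReal.ofReal_pow (abs_nonneg _), sq_abs]
  have e2 : ∀ p : ℝ × ℝ, (‖(p.2 : ℂ)^2 * g p.1 p.2‖₊ : ℝ≥0∞)^2
      = ENNReal.ofReal (p.2^4) * (‖g p.1 p.2‖₊ : ℝ≥0∞)^2 := by
    intro p
    rw [nnnorm_mul, ENNReal.coe_mul, mul_pow]
    congr 1
    rw [show ((p.2 : ℂ)^2) = ((p.2^2 : ℝ) : ℂ) by push_cast; ring, Complex.nnnorm_real,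
      ← enorm_eq_nnnorm, Real.enorm_eq_ofReal_abs, ← ENNReal.ofReal_pow (abs_nonneg _), abs_pow]
    norm_num [← pow_mul]
  have hKpt : ∀ p : ℝ × ℝ, K p.2 * (‖g p.1 p.2‖₊ : ℝ≥0∞)^2
      = (‖g p.1 p.2‖₊ : ℝ≥0∞)^2 + 2 * (‖(p.2 : ℂ) * g p.1 p.2‖₊ : ℝ≥0∞)^2
        + (‖(p.2 : ℂ)^2 * g p.1 p.2‖₊ : ℝ≥0∞)^2 := by
    intro p
    rw [e1, e2, K]
    have hsum : ENNReal.ofReal ((1 + p.2^2)^2)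
        = 1 + ENNReal.ofReal (2 * p.2^2) + ENNReal.ofReal (p.2^4) := by
      rw [show ((1 + p.2^2)^2 : ℝ) = 1 + 2*p.2^2 + p.2^4 by ring,
        ENNReal.ofReal_add (by positivity) (by positivity),
        ENNReal.ofReal_add (by positivity) (by positivity), ENNReal.ofReal_one]
    rw [hsum, add_mul, add_mul, one_mul]
    congr 1
    rw [show ENNReal.ofReal (2 * p.2^2) = 2 * ENNReal.ofReal (p.2^2) by
      rw [ENNReal.ofReal_mul (by norm_num)]; norm_num]
    ring
  -- the weighted square function and its integral
  set I : ℝ → ℝ≥0∞ := fun x => ∫⁻ s : ℝ, K s * (‖g x s‖₊ : ℝ≥0∞)^2 with hIdef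
  have hKg : AEMeasurable (fun p : ℝ × ℝ => K p.2 * (‖g p.1 p.2‖₊ : ℝ≥0∞)^2) volume :=
    ((hKmeas.comp measurable_snd).aemeasurable.mul (hgm.pow_const 2))
  have hI_eq : ∫⁻ x : ℝ, I x = ∫⁻ p : ℝ × ℝ, K p.2 * (‖g p.1 p.2‖₊ : ℝ≥0∞)^2 := by
    rw [hprod] at hKg ⊢
    exact (lintegral_prod _ hKg).symm
  have hABC : ∫⁻ p : ℝ × ℝ, K p.2 * (‖g p.1 p.2‖₊ : ℝ≥0∞)^2 = na^2 + 2*nb^2 + nc^2 := by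
    rw [lintegral_congr hKpt, lintegral_add_right' _ (hy2g.1.nnnorm.aemeasurable.coe_nnreal_ennreal.pow_const 2),
      lintegral_add_right' _ ((hyg.1.nnnorm.aemeasurable.coe_nnreal_ennreal.pow_const 2).const_mul 2),
      lintegral_const_mul' 2 _ (by norm_num),
      ← eLpNorm_two_sq (fun p : ℝ × ℝ => g p.1 p.2),
      ← eLpNorm_two_sq (fun p : ℝ × ℝ => (p.2 : ℂ) * g p.1 p.2),
      ← eLpNorm_two_sq (fun p : ℝ × ℝ => (p.2 : ℂ)^2 * g p.1 p.2)]
  have hItot : ∫⁻ x : ℝ, I x = na^2 + 2*nb^2 + nc^2 := hI_eq.trans hABC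
  have hsum_ne : na^2 + 2*nb^2 + nc^2 ≠ ⊤ := by
    refine ENNReal.add_ne_top.2 ⟨ENNReal.add_ne_top.2 ⟨?_, ?_⟩, ?_⟩
    · exact ENNReal.pow_ne_top hna_ne
    · exact ENNReal.mul_ne_top (by norm_num) (ENNReal.pow_ne_top hnb_ne)
    · exact ENNReal.pow_ne_top hnc_ne
  have hJmeas : Measurable (fun x : ℝ => ∫⁻ s : ℝ, K s * (‖G0 (x, s)‖₊ : ℝ≥0∞)^2) := by
    have hjoint : Measurable (fun p : ℝ × ℝ => K p.2 * (‖G0 p‖₊ : ℝ≥0∞)^2) :=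
      (hKmeas.comp measurable_snd).mul (hG0sm.measurable.enorm.pow_const 2)
    exact hjoint.lintegral_prod_right'
  have hImeas : AEMeasurable I volume := by
    refine hJmeas.aemeasurable.congr ?_
    filter_upwards [hslice_eq] with x hx
    refine lintegral_congr_ae ?_
    filter_upwards [hx] with s hs
    rw [hs]
  have hIfin : ∀ᵐ x : ℝ, I x < ⊤ := ae_lt_top' hImeas (by rw [hItot]; exact hsum_ne)
  -- the pointwise (in x) bound
  have hae_bound : ∀ᵐ x : ℝ, ∫⁻ y : ℝ, (‖f x y‖₊ : ℝ≥0∞)^2 ≤ ENNReal.ofReal Real.pi * I x := by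
    filter_upwards [hslice_eq, hzero, hIfin] with x hx_ae hx0 hxI
    have hsmx : AEStronglyMeasurable (g x) volume :=
      ⟨fun s => G0 (x, s), hG0sm.comp_measurable measurable_prodMk_left, hx_ae⟩
    have hxmeas : AEMeasurable (fun s : ℝ => ((‖g x s‖₊ : ℝ≥0∞))) volume := hsmx.enorm
    have hnorm_le : ∀ S : Set ℝ, (∫⁻ s in S, (‖g x s‖₊ : ℝ≥0∞))
        ≤ (∫⁻ s in S, φ s) ^ (1/2:ℝ) * (I x) ^ (1/2:ℝ) := by
      intro S
      have hu : AEMeasurable (fun s : ℝ => ENNReal.ofReal ((1+s^2)⁻¹)) (volume.restrict S) :=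
        Measurable.aemeasurable (by apply ENNReal.measurable_ofReal.comp; fun_prop)
      have hv : AEMeasurable (fun s : ℝ => ENNReal.ofReal (1+s^2) * (‖g x s‖₊ : ℝ≥0∞))
          (volume.restrict S) :=
        (Measurable.aemeasurable (by apply ENNReal.measurable_ofReal.comp; fun_prop)).mul
          hxmeas.restrict
      have hpt : ∀ s : ℝ, (‖g x s‖₊ : ℝ≥0∞)
          = ENNReal.ofReal ((1+s^2)⁻¹) * (ENNReal.ofReal (1+s^2) * (‖g x s‖₊ : ℝ≥0∞)) := by
        intro s
        rw [← mul_assoc, ← ENNReal.ofReal_mul (by positivity),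
          inv_mul_cancel₀ (by positivity : (1+s^2 : ℝ) ≠ 0), ENNReal.ofReal_one, one_mul]
      calc ∫⁻ s in S, (‖g x s‖₊ : ℝ≥0∞)
          = ∫⁻ s in S, ENNReal.ofReal ((1+s^2)⁻¹) * (ENNReal.ofReal (1+s^2) * (‖g x s‖₊ : ℝ≥0∞)) :=
            lintegral_congr fun s => hpt s
        _ ≤ (∫⁻ s in S, (ENNReal.ofReal ((1+s^2)⁻¹))^2) ^ (1/2:ℝ)
            * (∫⁻ s in S, (ENNReal.ofReal (1+s^2) * (‖g x s‖₊ : ℝ≥0∞))^2) ^ (1/2:ℝ) :=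
            cs _ hu hv
        _ ≤ (∫⁻ s in S, φ s) ^ (1/2:ℝ) * (I x) ^ (1/2:ℝ) := by
            refine mul_le_mul' (le_of_eq ?_) (ENNReal.rpow_le_rpow ?_ (by norm_num))
            · congr 1
              refine lintegral_congr fun s => ?_
              rw [φ, ← ENNReal.ofReal_pow (by positivity), inv_pow]
            · calc ∫⁻ s in S, (ENNReal.ofReal (1+s^2) * (‖g x s‖₊ : ℝ≥0∞))^2
                  = ∫⁻ s in S, K s * (‖g x s‖₊ : ℝ≥0∞)^2 := lintegral_congr fun s => by
                    rw [mul_pow, K, ← ENNReal.ofReal_pow (by positivity)]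
                _ ≤ I x := lintegral_mono' Measure.restrict_le_self le_rfl
    have hφfin : (∫⁻ s : ℝ, φ s) ≠ ⊤ :=
      (lt_of_le_of_lt lintegral_φ_le ENNReal.ofReal_lt_top).ne
    have hxint : Integrable (g x) volume := by
      refine ⟨hsmx, ?_⟩
      have h1 : ∫⁻ s : ℝ, (‖g x s‖₊ : ℝ≥0∞) ≤ (∫⁻ s : ℝ, φ s) ^ (1/2:ℝ) * (I x) ^ (1/2:ℝ) := by
        have := hnorm_le univ
        simpa [Measure.restrict_univ] using this
      refine lt_of_le_of_lt h1 ?_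
      exact ENNReal.mul_lt_top
        (ENNReal.rpow_lt_top_of_nonneg (by norm_num) hφfin)
        (ENNReal.rpow_lt_top_of_nonneg (by norm_num) hxI.ne)
    have hw_le : ∀ y : ℝ, (‖f x y‖₊ : ℝ≥0∞) ≤ (w y) ^ (1/2:ℝ) * (I x) ^ (1/2:ℝ) := by
      intro y
      rcases le_or_gt 0 y with hy | hy
      · rw [hE1 x y]
        refine le_trans (enorm_integral_le_lintegral_enorm _) ?_
        refine le_trans (hnorm_le (Ioi y)) ?_
        rw [w, if_pos hy]
      · have h := intervalIntegral.integral_Iic_add_Ioi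
          (hxint.integrableOn (s := Iic y)) (hxint.integrableOn (s := Ioi y))
        rw [hx0] at h
        have hsplit : ∫ s in Ioi y, g x s = - ∫ s in Iic y, g x s :=
          eq_neg_of_add_eq_zero_right h
        rw [hE1 x y, hsplit, nnnorm_neg]
        refine le_trans (enorm_integral_le_lintegral_enorm _) ?_
        have hIic : ∫⁻ s in Iic y, (‖g x s‖₊ : ℝ≥0∞) = ∫⁻ s in Iio y, (‖g x s‖₊ : ℝ≥0∞) :=
          (setLIntegral_congr Iio_ae_eq_Iic).symm
        refine le_trans (le_of_eq hIic) ?_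
        refine le_trans (hnorm_le (Iio y)) ?_
        rw [w, if_neg (not_le.2 hy)]
    calc ∫⁻ y : ℝ, (‖f x y‖₊ : ℝ≥0∞)^2
        ≤ ∫⁻ y : ℝ, w y * I x := by
          refine lintegral_mono fun y => ?_
          calc (‖f x y‖₊ : ℝ≥0∞)^2 ≤ ((w y) ^ (1/2:ℝ) * (I x) ^ (1/2:ℝ))^2 := by
                gcongr
                exact hw_le y
            _ = w y * I x := sq_halves _ _
      _ = (∫⁻ y : ℝ, w y) * I x := lintegral_mul_const' _ _ hxI.ne
      _ ≤ ENNReal.ofReal Real.pi * I x := mul_le_mul_left lintegral_w_le _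
  -- total bound
  have hTone : ∫⁻ p : ℝ × ℝ, (‖f p.1 p.2‖₊ : ℝ≥0∞)^2
      = ∫⁻ x : ℝ, ∫⁻ y : ℝ, (‖f x y‖₊ : ℝ≥0∞)^2 := by
    have hm := hfAESM.enorm.pow_const 2
    rw [hprod] at hm ⊢
    exact lintegral_prod _ hm
  have hmain : ∫⁻ p : ℝ × ℝ, (‖f p.1 p.2‖₊ : ℝ≥0∞)^2
      ≤ ENNReal.ofReal Real.pi * (na^2 + 2*nb^2 + nc^2) := by
    rw [hTone]
    calc ∫⁻ x : ℝ, ∫⁻ y : ℝ, (‖f x y‖₊ : ℝ≥0∞)^2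
        ≤ ∫⁻ x : ℝ, ENNReal.ofReal Real.pi * I x := lintegral_mono_ae hae_bound
      _ = ENNReal.ofReal Real.pi * ∫⁻ x : ℝ, I x := lintegral_const_mul' _ _ ENNReal.ofReal_ne_top
      _ = _ := by rw [hItot]
  have hRHS_ne : ENNReal.ofReal Real.pi * (na^2 + 2*nb^2 + nc^2) ≠ ⊤ :=
    ENNReal.mul_ne_top ENNReal.ofReal_ne_top hsum_ne
  have heL : eLpNorm (fun p : ℝ × ℝ => f p.1 p.2) 2 volume
      ≤ (ENNReal.ofReal Real.pi * (na^2 + 2*nb^2 + nc^2)) ^ (1/2:ℝ) := by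
    rw [eLpNorm_two_eq]
    exact ENNReal.rpow_le_rpow hmain (by norm_num)
  have hMem : MemLp (fun p : ℝ × ℝ => f p.1 p.2) 2 volume :=
    ⟨hfAESM, lt_of_le_of_lt heL (ENNReal.rpow_lt_top_of_nonneg (by norm_num) hRHS_ne)⟩
  refine ⟨hMem, ?_⟩
  -- Cauchy-Schwarz between the three norms
  have hBC : nb^2 ≤ na * nc := by
    have hvmeas : AEMeasurable (fun p : ℝ × ℝ => ENNReal.ofReal (p.2^2) * (‖g p.1 p.2‖₊ : ℝ≥0∞))
        volume :=
      (Measurable.aemeasurable (by apply ENNReal.measurable_ofReal.comp; fun_prop)).mul hgm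
    calc nb^2 = ∫⁻ p : ℝ × ℝ, (‖(p.2 : ℂ) * g p.1 p.2‖₊ : ℝ≥0∞)^2 :=
          eLpNorm_two_sq (fun p : ℝ × ℝ => (p.2 : ℂ) * g p.1 p.2)
      _ = ∫⁻ p : ℝ × ℝ, (‖g p.1 p.2‖₊ : ℝ≥0∞)
            * (ENNReal.ofReal (p.2^2) * (‖g p.1 p.2‖₊ : ℝ≥0∞)) := by
          refine lintegral_congr fun p => ?_
          rw [e1]; ring
      _ ≤ (∫⁻ p : ℝ × ℝ, (‖g p.1 p.2‖₊ : ℝ≥0∞)^2) ^ (1/2:ℝ)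
            * (∫⁻ p : ℝ × ℝ, (ENNReal.ofReal (p.2^2) * (‖g p.1 p.2‖₊ : ℝ≥0∞))^2) ^ (1/2:ℝ) :=
          cs _ hgm hvmeas
      _ = (∫⁻ p : ℝ × ℝ, (‖g p.1 p.2‖₊ : ℝ≥0∞)^2) ^ (1/2:ℝ)
            * (∫⁻ p : ℝ × ℝ, (‖(p.2 : ℂ)^2 * g p.1 p.2‖₊ : ℝ≥0∞)^2) ^ (1/2:ℝ) := by
          congr 2
          refine lintegral_congr fun p => ?_
          rw [e2 p, mul_pow, ← ENNReal.ofReal_pow (by positivity), ← pow_mul]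
      _ = (na^2) ^ (1/2:ℝ) * (nc^2) ^ (1/2:ℝ) := by
          rw [← eLpNorm_two_sq (fun p : ℝ × ℝ => g p.1 p.2),
            ← eLpNorm_two_sq (fun p : ℝ × ℝ => (p.2 : ℂ)^2 * g p.1 p.2)]
      _ = na * nc := by rw [rpow_sq_half, rpow_sq_half]
  -- pass to real numbers
  have ha0 : (0:ℝ) ≤ na.toReal := ENNReal.toReal_nonneg
  have hb0 : (0:ℝ) ≤ nb.toReal := ENNReal.toReal_nonneg
  have hc0 : (0:ℝ) ≤ nc.toReal := ENNReal.toReal_nonneg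
  have hb2ac : nb.toReal^2 ≤ na.toReal * nc.toReal := by
    have := ENNReal.toReal_mono (ENNReal.mul_ne_top hna_ne hnc_ne) hBC
    rwa [ENNReal.toReal_pow, ENNReal.toReal_mul] at this
  have hfin2 : (ENNReal.ofReal Real.pi * (na^2 + 2*nb^2 + nc^2)) ^ (1/2:ℝ) ≠ ⊤ :=
    (ENNReal.rpow_lt_top_of_nonneg (by norm_num) hRHS_ne).ne
  have h3 : (eLpNorm (fun p : ℝ × ℝ => f p.1 p.2) 2 volume).toReal
      ≤ ((ENNReal.ofReal Real.pi * (na^2 + 2*nb^2 + nc^2)) ^ (1/2:ℝ)).toReal :=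
    ENNReal.toReal_mono hfin2 heL
  have h4 : ((ENNReal.ofReal Real.pi * (na^2 + 2*nb^2 + nc^2)) ^ (1/2:ℝ)).toReal
      = (Real.pi * (na.toReal^2 + 2*nb.toReal^2 + nc.toReal^2)) ^ (1/2:ℝ) := by
    rw [← ENNReal.toReal_rpow]
    congr 1
    rw [ENNReal.toReal_mul, ENNReal.toReal_ofReal Real.pi_pos.le]
    congr 1
    rw [ENNReal.toReal_add (ENNReal.add_ne_top.2 ⟨ENNReal.pow_ne_top hna_ne,
        ENNReal.mul_ne_top (by norm_num) (ENNReal.pow_ne_top hnb_ne)⟩)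
        (ENNReal.pow_ne_top hnc_ne),
      ENNReal.toReal_add (ENNReal.pow_ne_top hna_ne)
        (ENNReal.mul_ne_top (by norm_num) (ENNReal.pow_ne_top hnb_ne)),
      ENNReal.toReal_mul, ENNReal.toReal_pow, ENNReal.toReal_pow, ENNReal.toReal_pow,
      ENNReal.toReal_ofNat]
  refine le_trans h3 ?_
  rw [h4, ← Real.sqrt_eq_rpow]
  have hsq : Real.pi * (na.toReal^2 + 2*nb.toReal^2 + nc.toReal^2)
      ≤ (2*(na.toReal + nb.toReal + nc.toReal))^2 := by
    nlinarith [Real.pi_le_four, Real.pi_pos.le, hb2ac, mul_nonneg ha0 hb0, mul_nonneg hb0 hc0,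
      mul_nonneg ha0 hc0, sq_nonneg nb.toReal,
      mul_nonneg (sub_nonneg.2 Real.pi_le_four)
        (by positivity : (0:ℝ) ≤ na.toReal^2 + 2*nb.toReal^2 + nc.toReal^2)]
  calc Real.sqrt (Real.pi * (na.toReal^2 + 2*nb.toReal^2 + nc.toReal^2))
      ≤ Real.sqrt ((2*(na.toReal + nb.toReal + nc.toReal))^2) := Real.sqrt_le_sqrt hsq
    _ = 2*(na.toReal + nb.toReal + nc.toReal) := Real.sqrt_sq (by positivity)
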